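/- Let G be a group and let V, W be free modules of finite positive rank over an Artinian local k-algebra 𝒜 equipped with 𝒜-linear G-actions. If the diagonal action of G on V ⊗_𝒜 W is trivial, then G acts on each of V and W by scalars (elements of 𝒜^×). -/

import Mathlib

open TensorProduct

lemma aux_scalar {𝒜 V W : Type*} [CommRing 𝒜]
    [AddCommGroup V] [Module 𝒜 V] [AddCommGroup W] [Module 𝒜 W]
    {ι κ : Type*} (b : Module.Basis ι 𝒜 V) (c : Module.Basis κ 𝒜 W) (i0 : ι) (j0 : κ)
    (f : V →ₗ[𝒜] V) (h : W →ₗ[𝒜] W)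
    (H : ∀ v w, f v ⊗ₜ[𝒜] h w = v ⊗ₜ[𝒜] w) :
    ∃ u : 𝒜ˣ, ∀ v : V, f v = (u : 𝒜) • v := by
  classical
  set a : ι → ι → 𝒜 := fun l i => b.repr (f (b i)) l with ha
  set d : κ → κ → 𝒜 := fun m j => c.repr (h (c j)) m with hd
  have key : ∀ i j l m, d m j * a l i
      = (if i = l then (if j = m then (1:𝒜) else 0) else 0) := by
    intro i j l m
    have := congrArg (fun x => (b.tensorProduct c).repr x (l, m)) (H (b i) (c j))
    simpa [Module.Basis.tensorProduct_repr_tmul_apply, Module.Basis.repr_self,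
      Finsupp.single_apply, ha, hd] using this
  have hu : d j0 j0 * a i0 i0 = 1 := by simpa using key i0 j0 i0 j0
  refine ⟨⟨a i0 i0, d j0 j0, by rw [mul_comm]; exact hu, hu⟩, ?_⟩
  have hcoef : ∀ i l, a l i = (if i = l then 1 else 0) * a i0 i0 := by
    intro i l
    have h1 : d j0 j0 * a l i = (if i = l then 1 else 0) := by
      simpa using key i j0 l j0
    calc a l i = (d j0 j0 * a l i) * a i0 i0 := by
          rw [mul_comm (d j0 j0), mul_assoc, hu, mul_one]
      _ = _ := by rw [h1]
  have hf : f = (a i0 i0) • LinearMap.id := by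
    apply b.ext; intro i
    apply b.repr.injective
    ext l
    have := hcoef i l
    simp only [ha] at this
    simp [this, Finsupp.single_apply, mul_comm, ha]
  intro v
  rw [hf]
  rfl

/-- Let `G` be a group and `V`, `W` free modules of finite positive rank over an Artinian
local `k`-algebra `𝒜`, equipped with `𝒜`-linear `G`-actions.  If the diagonal action of `G`
on `V ⊗[𝒜] W` is trivial, then `G` acts on each of `V` and `W` by scalars (units of `𝒜`). -/
theorem stmt_16
    {k 𝒜 G V W : Type*} [Field k] [CommRing 𝒜] [Algebra k 𝒜]
    [IsArtinianRing 𝒜] [IsLocalRing 𝒜] [Group G]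
    [AddCommGroup V] [Module 𝒜 V] [Module.Free 𝒜 V] [Module.Finite 𝒜 V] [Nontrivial V]
    [AddCommGroup W] [Module 𝒜 W] [Module.Free 𝒜 W] [Module.Finite 𝒜 W] [Nontrivial W]
    (ρV : Representation 𝒜 G V) (ρW : Representation 𝒜 G W)
    (htriv : ∀ g : G, (ρV.tprod ρW) g = LinearMap.id) :
    (∀ g : G, ∃ u : 𝒜ˣ, ∀ v : V, ρV g v = (u : 𝒜) • v) ∧
    (∀ g : G, ∃ u : 𝒜ˣ, ∀ w : W, ρW g w = (u : 𝒜) • w) := by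
  classical
  let b := Module.Free.chooseBasis 𝒜 V
  let c := Module.Free.chooseBasis 𝒜 W
  obtain ⟨i0⟩ := b.index_nonempty
  obtain ⟨j0⟩ := c.index_nonempty
  have H : ∀ g : G, ∀ (v : V) (w : W), ρV g v ⊗ₜ[𝒜] ρW g w = v ⊗ₜ[𝒜] w := by
    intro g v w
    have := congrArg (fun F : (V ⊗[𝒜] W) →ₗ[𝒜] (V ⊗[𝒜] W) => F (v ⊗ₜ w)) (htriv g)
    simpa [Representation.tprod_apply] using this
  constructor
  · intro g
    exact aux_scalar b c i0 j0 (ρV g) (ρW g) (H g)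
  · intro g
    have H' : ∀ (w : W) (v : V), ρW g w ⊗ₜ[𝒜] ρV g v = w ⊗ₜ[𝒜] v := by
      intro w v
      have := congrArg (TensorProduct.comm 𝒜 V W) (H g v w)
      simpa using this
    exact aux_scalar c b j0 i0 (ρW g) (ρV g) H'
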